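/- Let U, V, W be complex vector spaces. Suppose u₁, u₂, u₃ ∈ U are pairwise linearly independent (any two are linearly independent) but linearly dependent, and suppose v₁, v₂, v₃ ∈ V are also pairwise linearly independent but linearly dependent. Then for any nonzero w₁, w₂, w₃ ∈ W, the three tensors u₁ ⊗ v₁, u₂ ⊗ v₂, u₃ ⊗ v₃ ∈ U ⊗ V are linearly independent. -/

import Mathlib

open TensorProduct

lemma aux_dual {U : Type*} [AddCommGroup U] [Module ℂ U] (u1 u2 : U)
    (h : LinearIndependent ℂ ![u1, u2]) :
    ∃ f1 f2 : U →ₗ[ℂ] ℂ, f1 u1 = 1 ∧ f1 u2 = 0 ∧ f2 u1 = 0 ∧ f2 u2 = 1 := by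
  have hs : LinearIndepOn ℂ id (Set.range ![u1, u2]) := (linearIndepOn_id_range_iff h.injective).mpr h
  let B := Module.Basis.extend hs
  have hsub : Set.range ![u1, u2] ⊆ hs.extend (Set.subset_univ _) := hs.subset_extend _
  have h1 : u1 ∈ hs.extend (Set.subset_univ _) := hsub ⟨0, rfl⟩
  have h2 : u2 ∈ hs.extend (Set.subset_univ _) := hsub ⟨1, rfl⟩
  have hne : u1 ≠ u2 := by
    intro hh
    have := h.injective (by simp [hh] : (![u1,u2] : Fin 2 → U) 0 = ![u1,u2] 1)
    simp at this
  have e1 : B ⟨u1, h1⟩ = u1 := Module.Basis.extend_apply_self hs _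
  have e2 : B ⟨u2, h2⟩ = u2 := Module.Basis.extend_apply_self hs _
  have r1 : B.repr u1 = Finsupp.single ⟨u1, h1⟩ 1 := by
    rw [← Module.Basis.repr_self B ⟨u1, h1⟩]; exact congrArg B.repr e1.symm
  have r2 : B.repr u2 = Finsupp.single ⟨u2, h2⟩ 1 := by
    rw [← Module.Basis.repr_self B ⟨u2, h2⟩]; exact congrArg B.repr e2.symm
  refine ⟨B.coord ⟨u1, h1⟩, B.coord ⟨u2, h2⟩, ?_, ?_, ?_, ?_⟩ <;>
    simp [Module.Basis.coord_apply, r1, r2, Finsupp.single_apply, Subtype.ext_iff, hne, hne.symm]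

lemma aux_dep {U : Type*} [AddCommGroup U] [Module ℂ U] (u1 u2 u3 : U)
    (h12 : LinearIndependent ℂ ![u1, u2])
    (h13 : LinearIndependent ℂ ![u1, u3])
    (h23 : LinearIndependent ℂ ![u2, u3])
    (h : ¬ LinearIndependent ℂ ![u1, u2, u3]) :
    ∃ a b : ℂ, a ≠ 0 ∧ b ≠ 0 ∧ u3 = a • u1 + b • u2 := by
  rw [Fintype.not_linearIndependent_iff] at h
  obtain ⟨g, hg, i, hi⟩ := h
  have hsum : g 0 • u1 + g 1 • u2 + g 2 • u3 = 0 := by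
    simpa [Fin.sum_univ_three] using hg
  have hg2 : g 2 ≠ 0 := by
    intro h2
    have := Fintype.linearIndependent_iff.mp h12 ![g 0, g 1]
      (by simpa [Fin.sum_univ_two, h2] using hsum)
    have e0 := this 0
    have e1 := this 1
    simp at e0 e1
    fin_cases i <;> simp_all
  have hg0 : g 0 ≠ 0 := by
    intro h0
    have := Fintype.linearIndependent_iff.mp h23 ![g 1, g 2]
      (by simpa [Fin.sum_univ_two, h0] using hsum)
    exact hg2 (by simpa using this 1)
  have hg1 : g 1 ≠ 0 := by
    intro h1
    have := Fintype.linearIndependent_iff.mp h13 ![g 0, g 2]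
      (by simpa [Fin.sum_univ_two, h1] using hsum)
    exact hg2 (by simpa using this 1)
  refine ⟨-(g 0) / g 2, -(g 1) / g 2, by simp [hg0, hg2], by simp [hg1, hg2], ?_⟩
  have : g 2 • u3 = (-(g 0)) • u1 + (-(g 1)) • u2 := by
    rw [neg_smul, neg_smul]
    linear_combination (norm := module) hsum
  calc u3 = (g 2)⁻¹ • (g 2 • u3) := by rw [smul_smul, inv_mul_cancel₀ hg2, one_smul]
    _ = _ := by rw [this, smul_add, smul_smul, smul_smul]; ring_nf

theorem stmt_14 {U V W : Type*} [AddCommGroup U] [Module ℂ U]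
    [AddCommGroup V] [Module ℂ V] [AddCommGroup W] [Module ℂ W]
    (u1 u2 u3 : U) (v1 v2 v3 : V) (w1 w2 w3 : W)
    (hu12 : LinearIndependent ℂ ![u1, u2])
    (hu13 : LinearIndependent ℂ ![u1, u3])
    (hu23 : LinearIndependent ℂ ![u2, u3])
    (hu : ¬ LinearIndependent ℂ ![u1, u2, u3])
    (hv12 : LinearIndependent ℂ ![v1, v2])
    (hv13 : LinearIndependent ℂ ![v1, v3])
    (hv23 : LinearIndependent ℂ ![v2, v3])
    (hv : ¬ LinearIndependent ℂ ![v1, v2, v3])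
    (hw1 : w1 ≠ 0) (hw2 : w2 ≠ 0) (hw3 : w3 ≠ 0) :
    LinearIndependent ℂ ![u1 ⊗ₜ[ℂ] v1, u2 ⊗ₜ[ℂ] v2, u3 ⊗ₜ[ℂ] v3] := by
  obtain ⟨a, b, ha, hb, hu3⟩ := aux_dep u1 u2 u3 hu12 hu13 hu23 hu
  obtain ⟨c, d, hc, hd, hv3⟩ := aux_dep v1 v2 v3 hv12 hv13 hv23 hv
  obtain ⟨f1, f2, hf11, hf12, hf21, hf22⟩ := aux_dual u1 u2 hu12
  obtain ⟨g1, g2, hg11, hg12, hg21, hg22⟩ := aux_dual v1 v2 hv12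
  rw [Fintype.linearIndependent_iff]
  intro k hk
  have hk' : k 0 • (u1 ⊗ₜ[ℂ] v1) + k 1 • (u2 ⊗ₜ[ℂ] v2) + k 2 • (u3 ⊗ₜ[ℂ] v3) = 0 := by
    simpa [Fin.sum_univ_three] using hk
  have key : ∀ f : U →ₗ[ℂ] ℂ, ∀ g : V →ₗ[ℂ] ℂ,
      k 0 * (f u1 * g v1) + k 1 * (f u2 * g v2) + k 2 * (f u3 * g v3) = 0 := by
    intro f g
    have := congrArg (TensorProduct.lift ((LinearMap.mul ℂ ℂ).compl₁₂ f g)) hk'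
    simpa [map_add, map_smul, TensorProduct.lift.tmul, smul_eq_mul] using this
  have hfu3 : ∀ p q : ℂ, ∀ f : U →ₗ[ℂ] ℂ, f u1 = p → f u2 = q → f u3 = p * a + q * b := by
    intro p q f hp hq
    rw [hu3, map_add, map_smul, map_smul, hp, hq, smul_eq_mul, smul_eq_mul]; ring
  have hgv3 : ∀ p q : ℂ, ∀ g : V →ₗ[ℂ] ℂ, g v1 = p → g v2 = q → g v3 = p * c + q * d := by
    intro p q g hp hq
    rw [hv3, map_add, map_smul, map_smul, hp, hq, smul_eq_mul, smul_eq_mul]; ring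
  have e12 := key f1 g2
  rw [hf11, hf12, hg21, hg22, hfu3 1 0 f1 hf11 hf12, hgv3 0 1 g2 hg21 hg22] at e12
  have hk2 : k 2 = 0 := by
    have h' : k 2 * (a * d) = 0 := by linear_combination e12
    rcases mul_eq_zero.mp h' with h'' | h''
    · exact h''
    · rcases mul_eq_zero.mp h'' with h3 | h3 <;> simp_all
  have e11 := key f1 g1
  rw [hf11, hf12, hg11, hg12, hk2] at e11
  have hk0 : k 0 = 0 := by simpa using e11
  have e22 := key f2 g2
  rw [hf21, hf22, hg21, hg22, hk2] at e22
  have hk1 : k 1 = 0 := by simpa using e22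
  intro i
  fin_cases i <;> assumption
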